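/- One-way traffic goal achievement under the strong assumption: consider the dynamics of Example 'one-way traffic' where SV runs the program α ≡ (dwhile (v > v_min ∧ x < y_tgt) brake); (dwhile (x < y_tgt) cruise); (dwhile (v > 0) brake), with brake dynamics ẋ = v, v̇ = −b_min and cruise dynamics ẋ = v, v̇ = 0, while POV has ẋ_f = v_f, v̇_f = a_f. Under assumption A ≡ (−b_min < a_f < a_max ∧ v_f > v_min) and precondition P ≡ (x_f − x > dRSS(v_f, v) ∧ v > 0), every execution of α terminates with v = 0 and x ≥ y_tgt, and x < x_f holds throughout. -/

import Mathlib

/-- The RSS safety distance. -/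
noncomputable def dRSS (ρR amax bmin bmax vf vr : ℝ) : ℝ :=
  max 0 (vr * ρR + (1/2) * amax * ρR ^ 2 + (vr + amax * ρR) ^ 2 / (2 * bmin)
    - vf ^ 2 / (2 * bmax))


lemma myMono {f f' : ℝ → ℝ} {a b : ℝ}
    (hf : ∀ t ∈ Set.Icc a b, HasDerivWithinAt f (f' t) (Set.Icc a b) t)
    (h0 : ∀ t ∈ Set.Ioo a b, 0 ≤ f' t) : MonotoneOn f (Set.Icc a b) := by
  apply monotoneOn_of_hasDerivWithinAt_nonneg (convex_Icc a b)
      (fun t ht => (hf t ht).continuousWithinAt) (f' := f')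
  · intro t ht
    rw [interior_Icc] at ht ⊢
    exact ((hf t (Set.Ioo_subset_Icc_self ht)).mono Set.Ioo_subset_Icc_self)
  · rw [interior_Icc]; exact h0

lemma myConst {f : ℝ → ℝ} {a b : ℝ}
    (hf : ∀ t ∈ Set.Icc a b, HasDerivWithinAt f 0 (Set.Icc a b) t) :
    ∀ t ∈ Set.Icc a b, f t = f a := by
  intro t ht
  have hab : a ∈ Set.Icc a b := ⟨le_refl a, ht.1.trans ht.2⟩
  have h1 := myMono (f' := fun _ => (0:ℝ)) hf (fun _ _ => le_refl 0) hab ht ht.1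
  have h2 := myMono (f' := fun _ => (0:ℝ)) (fun t ht => by simpa using (hf t ht).neg) (fun _ _ => le_refl 0) hab ht ht.1
  simp only [Pi.neg_apply] at h2
  linarith

lemma leftLim_ge {f : ℝ → ℝ} {a b c : ℝ} (hab : a < b)
    (hc : ContinuousWithinAt f (Set.Icc a b) b)
    (h : ∀ t ∈ Set.Ico a b, c ≤ f t) : c ≤ f b := by
  have hne : (nhdsWithin b (Set.Ico a b)).NeBot := by
    rw [← mem_closure_iff_nhdsWithin_neBot, closure_Ico hab.ne]
    exact ⟨hab.le, le_refl b⟩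
  exact ge_of_tendsto (hc.mono Set.Ico_subset_Icc_self).tendsto
    (Filter.eventually_of_mem self_mem_nhdsWithin h)

lemma safe_phase {v vf x xf : ℝ → ℝ} {bmin a b : ℝ} (hb : 0 < bmin)
    (hu_mono : MonotoneOn (fun t => vf t - v t) (Set.Icc a b))
    (hu_cont : ContinuousOn (fun t => vf t - v t) (Set.Icc a b))
    (hE_mono : MonotoneOn (fun t => xf t - x t + (vf t ^ 2 - v t ^ 2) / (2 * bmin)) (Set.Icc a b))
    (hvf_pos : ∀ t ∈ Set.Icc a b, 0 < vf t)
    (hDmono : ∀ s ∈ Set.Icc a b, ∀ t ∈ Set.Icc a b, s ≤ t →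
      (∀ r ∈ Set.Ioo s t, 0 ≤ vf r - v r) → xf s - x s ≤ xf t - x t)
    (hEa : 0 < xf a - x a + (vf a ^ 2 - v a ^ 2) / (2 * bmin))
    (hDa : 0 < xf a - x a) :
    ∀ t ∈ Set.Icc a b, 0 < xf t - x t := by
  intro t ht
  have hat : a ∈ Set.Icc a b := ⟨le_refl a, ht.1.trans ht.2⟩
  by_cases hut : vf t - v t ≤ 0
  · have hE : 0 < xf t - x t + (vf t ^ 2 - v t ^ 2) / (2 * bmin) :=
      lt_of_lt_of_le hEa (hE_mono hat ht ht.1)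
    have hv : 0 < vf t := hvf_pos t ht
    have h1 : vf t ^ 2 - v t ^ 2 ≤ 0 := by nlinarith
    have h2 : (vf t ^ 2 - v t ^ 2) / (2 * bmin) ≤ 0 :=
      div_nonpos_of_nonpos_of_nonneg h1 (by linarith)
    linarith
  · push_neg at hut
    by_cases hua : 0 ≤ vf a - v a
    · have := hDmono a hat t ht ht.1 (fun r hr =>
        le_trans hua (hu_mono hat ⟨hr.1.le, hr.2.le.trans ht.2⟩ hr.1.le))
      linarith
    · push_neg at hua
      obtain ⟨τ, hτmem, hτ⟩ := intermediate_value_Icc ht.1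
        (hu_cont.mono (Set.Icc_subset_Icc (le_refl a) ht.2))
        (⟨hua.le, hut.le⟩ : (0:ℝ) ∈ Set.Icc (vf a - v a) (vf t - v t))
      simp only at hτ
      have hτb : τ ∈ Set.Icc a b := ⟨hτmem.1, hτmem.2.trans ht.2⟩
      have hvτ : vf τ = v τ := by linarith
      have hEτ : 0 < xf τ - x τ + (vf τ ^ 2 - v τ ^ 2) / (2 * bmin) :=
        lt_of_lt_of_le hEa (hE_mono hat hτb hτmem.1)
      rw [hvτ, sub_self, zero_div, add_zero] at hEτ
      have := hDmono τ hτb t ht hτmem.2 (fun r hr => by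
        have h := hu_mono hτb ⟨hτmem.1.trans hr.1.le, hr.2.le.trans ht.2⟩ hr.1.le
        simp only at h
        linarith)
      linarith

/-- One-way traffic goal achievement under the strong assumption: an execution
of `α ≡ (dwhile (v > vmin ∧ x < ytgt) brake); (dwhile (x < ytgt) cruise);
(dwhile (v > 0) brake)` — presented by its phase-switching times
`t1 ≤ t2 ≤ t3`, with phase invariants holding strictly inside each phase and
the loop conditions failing at the exits — terminates with `v = 0` and
`x ≥ ytgt`, and satisfies `x < x_f` throughout, provided the assumption
`−bmin < a_f < amax ∧ v_f > vmin` holds throughout and the precondition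
`x_f − x > dRSS(v_f, v) ∧ v > 0` holds initially. -/
theorem one_way_goal_achievement
    (ρR amax bmin bmax vmin ytgt : ℝ)
    (hρ : 0 < ρR) (ha : 0 < amax) (hbmin : 0 < bmin) (hbmax : 0 < bmax)
    (hbb : bmin ≤ bmax) (hvmin : 0 < vmin)
    (x v xf vf af : ℝ → ℝ) (t1 t2 t3 : ℝ)
    (ht1 : 0 ≤ t1) (ht12 : t1 ≤ t2) (ht23 : t2 ≤ t3)
    -- continuous dynamics of SV's position and POV
    (hx : ∀ t ∈ Set.Icc 0 t3, HasDerivWithinAt x (v t) (Set.Icc 0 t3) t)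
    (hxf : ∀ t ∈ Set.Icc 0 t3, HasDerivWithinAt xf (vf t) (Set.Icc 0 t3) t)
    (hvf : ∀ t ∈ Set.Icc 0 t3, HasDerivWithinAt vf (af t) (Set.Icc 0 t3) t)
    -- SV's velocity: brake, cruise, brake
    (hv1 : ∀ t ∈ Set.Icc 0 t1, HasDerivWithinAt v (-bmin) (Set.Icc 0 t1) t)
    (hv2 : ∀ t ∈ Set.Icc t1 t2, HasDerivWithinAt v 0 (Set.Icc t1 t2) t)
    (hv3 : ∀ t ∈ Set.Icc t2 t3, HasDerivWithinAt v (-bmin) (Set.Icc t2 t3) t)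
    -- loop invariants inside each phase, loop conditions failing at exits
    (hp1 : ∀ t ∈ Set.Ico 0 t1, v t > vmin ∧ x t < ytgt)
    (he1 : ¬ (v t1 > vmin ∧ x t1 < ytgt))
    (hp2 : ∀ t ∈ Set.Ico t1 t2, x t < ytgt)
    (he2 : ¬ (x t2 < ytgt))
    (hp3 : ∀ t ∈ Set.Ico t2 t3, v t > 0)
    (he3 : ¬ (v t3 > 0))
    -- assumption A throughout
    (hA : ∀ t ∈ Set.Icc 0 t3, -bmin < af t ∧ af t < amax ∧ vf t > vmin)
    -- precondition P
    (hP : xf 0 - x 0 > dRSS ρR amax bmin bmax (vf 0) (v 0) ∧ v 0 > 0) :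
    v t3 = 0 ∧ x t3 ≥ ytgt ∧ ∀ t ∈ Set.Icc 0 t3, x t < xf t := by
  have hbne : bmin ≠ 0 := ne_of_gt hbmin
  have ht13 : t1 ≤ t3 := ht12.trans ht23
  have ht02 : (0:ℝ) ≤ t2 := ht1.trans ht12
  have hsub1 : Set.Icc (0:ℝ) t1 ⊆ Set.Icc 0 t3 := Set.Icc_subset_Icc le_rfl ht13
  have hsub2 : Set.Icc t1 t2 ⊆ Set.Icc 0 t3 := Set.Icc_subset_Icc ht1 ht23
  have hsub3 : Set.Icc t2 t3 ⊆ Set.Icc 0 t3 := Set.Icc_subset_Icc ht02 le_rfl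
  have hvfpos : ∀ t ∈ Set.Icc 0 t3, 0 < vf t := fun t ht => hvmin.trans (hA t ht).2.2
  -- the relative position is monotone wherever vf - v ≥ 0
  have hDmono : ∀ s ∈ Set.Icc 0 t3, ∀ t ∈ Set.Icc 0 t3, s ≤ t →
      (∀ r ∈ Set.Ioo s t, 0 ≤ vf r - v r) → xf s - x s ≤ xf t - x t := by
    intro s hs t ht hst hnn
    have hsub : Set.Icc s t ⊆ Set.Icc 0 t3 := Set.Icc_subset_Icc hs.1 ht.2
    have := myMono (f' := fun r => vf r - v r) (a := s) (b := t)
      (fun r hr => (((hxf r (hsub hr)).sub (hx r (hsub hr))).mono hsub)) hnn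
    exact this ⟨le_rfl, hst⟩ ⟨hst, le_rfl⟩ hst
  -- during a brake phase, E = (xf - x) + (vf² - v²)/(2 bmin) is monotone
  have hEmono : ∀ a b : ℝ, 0 ≤ a → b ≤ t3 →
      (∀ t ∈ Set.Icc a b, HasDerivWithinAt v (-bmin) (Set.Icc a b) t) →
      MonotoneOn (fun t => xf t - x t + (vf t ^ 2 - v t ^ 2) / (2 * bmin)) (Set.Icc a b) := by
    intro a b ha0 hb3 hvb
    have hsub : Set.Icc a b ⊆ Set.Icc 0 t3 := Set.Icc_subset_Icc ha0 hb3
    apply myMono (f' := fun r => vf r * (bmin + af r) / bmin)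
    · intro r hr
      have hd := (((hxf r (hsub hr)).mono hsub).sub ((hx r (hsub hr)).mono hsub)).add
        (((((hvf r (hsub hr)).mono hsub).pow 2).sub ((hvb r hr).pow 2)).div_const (2*bmin))
      refine hd.congr_deriv ?_
      push_cast
      field_simp
      ring
    · intro r hr
      have hAr := hA r (hsub (Set.Ioo_subset_Icc_self hr))
      exact le_of_lt (div_pos (mul_pos (hvmin.trans hAr.2.2) (by linarith [hAr.1])) hbmin)
  -- during a brake phase, u = vf - v is monotone
  have hUmono : ∀ a b : ℝ, 0 ≤ a → b ≤ t3 →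
      (∀ t ∈ Set.Icc a b, HasDerivWithinAt v (-bmin) (Set.Icc a b) t) →
      MonotoneOn (fun t => vf t - v t) (Set.Icc a b) := by
    intro a b ha0 hb3 hvb
    have hsub : Set.Icc a b ⊆ Set.Icc 0 t3 := Set.Icc_subset_Icc ha0 hb3
    apply myMono (f' := fun r => af r + bmin)
    · intro r hr
      have := ((hvf r (hsub hr)).mono hsub).sub (hvb r hr)
      refine this.congr_deriv ?_
      ring
    · intro r hr
      linarith [(hA r (hsub (Set.Ioo_subset_Icc_self hr))).1]
  have hUcont1 : ContinuousOn (fun t => vf t - v t) (Set.Icc 0 t1) := fun r hr =>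
    (((hvf r (hsub1 hr)).mono hsub1).sub (hv1 r hr)).continuousWithinAt
  have hUcont3 : ContinuousOn (fun t => vf t - v t) (Set.Icc t2 t3) := fun r hr =>
    (((hvf r (hsub3 hr)).mono hsub3).sub (hv3 r hr)).continuousWithinAt
  -- initial values
  have hdr : xf 0 - x 0 > max 0 (v 0 * ρR + (1/2) * amax * ρR ^ 2
      + (v 0 + amax * ρR) ^ 2 / (2 * bmin) - vf 0 ^ 2 / (2 * bmax)) := hP.1
  have hD0 : 0 < xf 0 - x 0 := lt_of_le_of_lt (le_max_left _ _) hdr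
  have hE0 : 0 < xf 0 - x 0 + (vf 0 ^ 2 - v 0 ^ 2) / (2 * bmin) := by
    have h1 := le_max_right (0:ℝ) (v 0 * ρR + (1/2) * amax * ρR ^ 2
      + (v 0 + amax * ρR) ^ 2 / (2 * bmin) - vf 0 ^ 2 / (2 * bmax))
    have h2 : vf 0 ^ 2 / (2 * bmax) ≤ vf 0 ^ 2 / (2 * bmin) :=
      div_le_div_of_nonneg_left (sq_nonneg _) (by linarith) (by linarith)
    have h3 : v 0 ^ 2 / (2 * bmin) ≤ (v 0 + amax * ρR) ^ 2 / (2 * bmin) := by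
      apply div_le_div_of_nonneg_right ?_ (by linarith)
      nlinarith [hP.2, mul_pos ha hρ]
    have h4 : (vf 0 ^ 2 - v 0 ^ 2) / (2 * bmin) = vf 0 ^ 2 / (2*bmin) - v 0 ^ 2 / (2*bmin) :=
      sub_div _ _ _
    have h5 : 0 ≤ v 0 * ρR := le_of_lt (mul_pos hP.2 hρ)
    have h6 : 0 ≤ (1/2) * amax * ρR ^ 2 := by positivity
    linarith
  -- v at switching times
  have hvt1 : 0 < v t1 := by
    rcases eq_or_lt_of_le ht1 with h|h
    · rw [← h]; exact hP.2
    · have := leftLim_ge h (hv1 t1 ⟨ht1, le_rfl⟩).continuousWithinAt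
        (fun s hs => (hp1 s hs).1.le)
      linarith
  have hvc : ∀ t ∈ Set.Icc t1 t2, v t = v t1 := myConst hv2
  have hvt1le : t1 < t2 → v t1 ≤ vmin := by
    intro h
    rcases not_and_or.mp he1 with h'|h'
    · exact not_lt.mp h'
    · exact absurd (hp2 t1 ⟨le_rfl, h⟩) h'
  have ht23' : t2 < t3 := by
    rcases eq_or_lt_of_le ht23 with h|h
    · exfalso; apply he3
      rw [← h, hvc t2 ⟨ht12, le_rfl⟩]
      exact hvt1
    · exact h
  have hvt3 : v t3 = 0 := by
    have h1 : v t3 ≤ 0 := not_lt.mp he3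
    have h2 : (0:ℝ) ≤ v t3 := leftLim_ge ht23' (hv3 t3 ⟨ht23, le_rfl⟩).continuousWithinAt
      (fun s hs => (hp3 s hs).le)
    linarith
  have hxt3 : ytgt ≤ x t3 := by
    have hxmono : MonotoneOn x (Set.Icc t2 t3) := myMono (f' := v)
      (fun r hr => (hx r (hsub3 hr)).mono hsub3)
      (fun r hr => (hp3 r ⟨hr.1.le, hr.2⟩).le)
    exact le_trans (not_lt.mp he2) (hxmono ⟨le_rfl, ht23⟩ ⟨ht23, le_rfl⟩ ht23)
  -- safety on phase 1
  have hS1 : ∀ t ∈ Set.Icc 0 t1, 0 < xf t - x t :=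
    safe_phase hbmin (hUmono 0 t1 le_rfl ht13 hv1) hUcont1 (hEmono 0 t1 le_rfl ht13 hv1)
      (fun t ht => hvfpos t (hsub1 ht))
      (fun s hs t ht h hn => hDmono s (hsub1 hs) t (hsub1 ht) h hn) hE0 hD0
  -- safety up to t2
  have hS2 : ∀ t ∈ Set.Icc 0 t2, 0 < xf t - x t := by
    intro t ht
    rcases le_or_gt t t1 with h|h
    · exact hS1 t ⟨ht.1, h⟩
    · have h12 : t1 < t2 := lt_of_lt_of_le h ht.2
      have hvle := hvt1le h12
      have hun : ∀ r ∈ Set.Ioo t1 t, 0 ≤ vf r - v r := by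
        intro r hr
        have hrm : r ∈ Set.Icc t1 t2 := ⟨hr.1.le, hr.2.le.trans ht.2⟩
        have h1 := hvc r hrm
        have h2 := (hA r (hsub2 hrm)).2.2
        linarith
      have := hDmono t1 ⟨ht1, ht13⟩ t ⟨ht.1, ht.2.trans ht23⟩ h.le hun
      have hd1 := hS1 t1 ⟨ht1, le_rfl⟩
      linarith
  -- E at t2
  have hEt2 : 0 < xf t2 - x t2 + (vf t2 ^ 2 - v t2 ^ 2) / (2 * bmin) := by
    rcases eq_or_lt_of_le ht12 with h|h
    · have hmono := (hEmono 0 t1 le_rfl ht13 hv1) ⟨le_rfl, ht1⟩ ⟨ht1, le_rfl⟩ ht1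
      simp only at hmono
      rw [← h]
      linarith
    · have hd := hS2 t2 ⟨ht02, le_rfl⟩
      have hv2' : v t2 = v t1 := hvc t2 ⟨ht12, le_rfl⟩
      have hle : v t2 ≤ vmin := by rw [hv2']; exact hvt1le h
      have hvfr := (hA t2 ⟨ht02, ht23⟩).2.2
      have hvpos : 0 < v t2 := by rw [hv2']; exact hvt1
      have hnum : 0 ≤ vf t2 ^ 2 - v t2 ^ 2 := by nlinarith
      have : 0 ≤ (vf t2 ^ 2 - v t2 ^ 2) / (2 * bmin) := div_nonneg hnum (by linarith)
      linarith
  -- safety on phase 3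
  have hS3 : ∀ t ∈ Set.Icc t2 t3, 0 < xf t - x t :=
    safe_phase hbmin (hUmono t2 t3 ht02 le_rfl hv3) hUcont3 (hEmono t2 t3 ht02 le_rfl hv3)
      (fun t ht => hvfpos t (hsub3 ht))
      (fun s hs t ht h hn => hDmono s (hsub3 hs) t (hsub3 ht) h hn) hEt2
      (hS2 t2 ⟨ht02, le_rfl⟩)
  refine ⟨hvt3, hxt3, fun t ht => ?_⟩
  rcases le_or_gt t t2 with h|h
  · have := hS2 t ⟨ht.1, h⟩; linarith
  · have := hS3 t ⟨h.le, ht.2⟩; linarith
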